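/- Let z₁ ∈ ℂ\{0,1\} with z₁' = 1/(1−z₁), z₁'' = 1−z₁⁻¹, and let A = (a₁, a₂, …, a_N), B = (b₁, …, b_N) be N×N complex matrices given by their columns. Define Ã = (−b₁, a₂, …, a_N) and B̃ = (a₁−b₁, b₂, …, b_N), and set z̃ = (z₁', z₂, …, z_N), z̃'' = (z₁, z₂'', …, z_N'') where zᵢ'' = 1−zᵢ⁻¹ for all i. Then det(Ã·Δ_{z̃''} + B̃·Δ_{z̃}⁻¹) = −z₁ · det(A·Δ_{z''} + B·Δ_z⁻¹), where Δ_v denotes the diagonal matrix with entries v. -/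

import Mathlib

open Matrix

theorem det_change_of_quad {N : ℕ}
    (A B : Matrix (Fin (N + 1)) (Fin (N + 1)) ℂ)
    (z : Fin (N + 1) → ℂ) (hz0 : z 0 ≠ 0) (hz1 : z 0 ≠ 1) :
    let z'' : Fin (N + 1) → ℂ := fun i => 1 - (z i)⁻¹
    let Atil : Matrix (Fin (N + 1)) (Fin (N + 1)) ℂ :=
      A.updateCol 0 (fun i => -B i 0)
    let Btil : Matrix (Fin (N + 1)) (Fin (N + 1)) ℂ :=
      B.updateCol 0 (fun i => A i 0 - B i 0)
    let ztil : Fin (N + 1) → ℂ := Function.update z 0 ((1 - z 0)⁻¹)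
    let ztil'' : Fin (N + 1) → ℂ := Function.update z'' 0 (z 0)
    Matrix.det (Atil * Matrix.diagonal ztil''
        + Btil * Matrix.diagonal (fun i => (ztil i)⁻¹))
      = -z 0 * Matrix.det (A * Matrix.diagonal z''
        + B * Matrix.diagonal (fun i => (z i)⁻¹)) := by
  intro z'' Atil Btil ztil ztil''
  set M : Matrix (Fin (N + 1)) (Fin (N + 1)) ℂ :=
    A * Matrix.diagonal z'' + B * Matrix.diagonal (fun i => (z i)⁻¹) with hMdef
  have h1 : (1 : ℂ) - z 0 ≠ 0 := by
    intro h
    apply hz1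
    linear_combination -h
  have hM : Atil * Matrix.diagonal ztil''
      + Btil * Matrix.diagonal (fun i => (ztil i)⁻¹)
      = M.updateCol 0 ((-z 0) • fun i => M i 0) := by
    ext i j
    by_cases hj : j = 0
    · subst hj
      simp only [hMdef, Atil, Btil, ztil, ztil'', z'', Matrix.add_apply, mul_diagonal,
        updateCol_apply, if_pos rfl, Function.update_self, Pi.smul_apply,
        smul_eq_mul, inv_inv, if_true]
      field_simp
      ring
    · simp [hMdef, Atil, Btil, ztil, ztil'', Matrix.add_apply, mul_diagonal,
        updateCol_apply, hj, Function.update_of_ne hj]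
  rw [hM, det_updateCol_smul]
  congr 1
  conv_rhs => rw [← M.updateCol_eq_self 0]
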